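/- Let f : ℝ^n → ℝ ∪ {∞}, let C ⊆ ℝ^n be a nonempty closed convex set, let x̄ ∈ C ∩ dom f, and suppose epi f is locally closed around (x̄, f(x̄)). Then for every λ ∈ ℝ: D*_C 𝓔^f(x̄, f(x̄))(λ) = λ·∂_C f(x̄) := {λ x* : x* ∈ ∂_C f(x̄)} if λ > 0; D*_C 𝓔^f(x̄, f(x̄))(0) = ∂^∞_C f(x̄); and D*_C 𝓔^f(x̄, f(x̄))(λ) = ∅ if λ < 0. -/

import Mathlib

open Set Metric Filter Topology
open scoped RealInnerProductSpace Pointwise ENNReal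

variable {E : Type*} [NormedAddCommGroup E] [InnerProductSpace ℝ E]
variable {F' : Type*} [NormedAddCommGroup F'] [InnerProductSpace ℝ F']

/-- `Π(x,Ω)`: the set of closest points (Euclidean projectors) of `x` in `Ω`. -/
def projSet (x : E) (Ω : Set E) : Set E := {u | u ∈ Ω ∧ ‖u - x‖ = Metric.infDist x Ω}

/-- `Π⁻¹(u,Ω)`. -/
def projInv (u : E) (Ω : Set E) : Set E := {x | u ∈ projSet x Ω}

/-- The proximal normal cone to `Ω` at `x` with respect to `C`:
`N^p_C(x,Ω) = {v | ∃ t > 0, x + t v ∈ Π⁻¹(x, Ω ∩ C) ∩ C}`. -/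
def proxNC (C Ω : Set E) (x : E) : Set E :=
  {v | ∃ t > (0 : ℝ), x + t • v ∈ projInv x (Ω ∩ C) ∩ C}

/-- The limiting normal cone to `Ω` at `x` with respect to `C`
(sequential Painlevé–Kuratowski outer limit of `N^p_C(·,Ω)` over `Ω ∩ C ∋ x_k → x`). -/
def limNC (C Ω : Set E) (x : E) : Set E :=
  {v | ∃ (xs vs : ℕ → E),
    (∀ k, xs k ∈ Ω ∩ C) ∧ Filter.Tendsto xs Filter.atTop (nhds x) ∧
    (∀ k, vs k ∈ proxNC C Ω (xs k)) ∧ Filter.Tendsto vs Filter.atTop (nhds v)}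

/-- A pair `(x,y)` as an element of the `L²` (Euclidean) product. -/
noncomputable def toL2 (x : E) (y : F') : WithLp 2 (E × F') :=
  (WithLp.equiv 2 (E × F')).symm (x, y)

/-- The graph of a set-valued map, inside the `L²` product. -/
def gphL2 (F : E → Set F') : Set (WithLp 2 (E × F')) :=
  {p | ((WithLp.equiv 2 (E × F')) p).2 ∈ F ((WithLp.equiv 2 (E × F')) p).1}

/-- The cylinder `C × ℝ^m` inside the `L²` product. -/
def cylL2 (C : Set E) : Set (WithLp 2 (E × F')) :=
  {p | ((WithLp.equiv 2 (E × F')) p).1 ∈ C}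

/-- The limiting coderivative of `F` at `(xb,yb)` with respect to `C`:
`D*_C F(xb,yb)(y*) = {x* | (x*,-y*) ∈ N_{C×ℝ^m}((xb,yb), gph F_C)}`. -/
noncomputable def coderivWRT (C : Set E) (F : E → Set F') (xb : E) (yb : F')
    (ystar : F') : Set E :=
  {xstar | toL2 xstar (-ystar) ∈ limNC (cylL2 C) (gphL2 F ∩ cylL2 C) (toL2 xb yb)}

/-- The real value of `f : E → ℝ ∪ {∞}` (defaulting to `0` outside `dom f`). -/
noncomputable def rv (f : E → WithTop ℝ) (x : E) : ℝ := (f x).untopD 0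

/-- The epigraph of `f`, inside the `L²` product `E ×₂ ℝ`. -/
def epiL2 (f : E → WithTop ℝ) : Set (WithLp 2 (E × ℝ)) :=
  {p | f ((WithLp.equiv 2 (E × ℝ)) p).1 ≤ ((((WithLp.equiv 2 (E × ℝ)) p).2 : ℝ) : WithTop ℝ)}

/-- The epigraphical mapping `𝓔^f(x) = {α | α ≥ f(x)}`. -/
def epiMap (f : E → WithTop ℝ) : E → Set ℝ := fun x => {a : ℝ | f x ≤ (a : WithTop ℝ)}

/-- The limiting subdifferential of `f` at `xb` with respect to `C`:
`∂_C f(xb) = {x* | (x*,-1) ∈ N_{C×ℝ}((xb,f(xb)), epi f)}`. -/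
noncomputable def limSubdiffWRT (C : Set E) (f : E → WithTop ℝ) (xb : E) : Set E :=
  {v | toL2 v (-1 : ℝ) ∈ limNC (cylL2 C) (epiL2 f) (toL2 xb (rv f xb))}

/-- The singular (horizon) subdifferential of `f` at `xb` with respect to `C`:
`∂^∞_C f(xb) = {x* | (x*,0) ∈ N_{C×ℝ}((xb,f(xb)), epi f)}`. -/
noncomputable def singSubdiffWRT (C : Set E) (f : E → WithTop ℝ) (xb : E) : Set E :=
  {v | toL2 v (0 : ℝ) ∈ limNC (cylL2 C) (epiL2 f) (toL2 xb (rv f xb))}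

/-- The proximal subdifferential of `f` at `xb` with respect to `C`:
`∂^p_C f(xb) = {x* | (x*,-1) ∈ N^p_{C×ℝ}((xb,f(xb)), epi f)}`. -/
noncomputable def proxSubdiffWRT (C : Set E) (f : E → WithTop ℝ) (xb : E) : Set E :=
  {v | toL2 v (-1 : ℝ) ∈ proxNC (cylL2 C) (epiL2 f) (toL2 xb (rv f xb))}


section Aux

variable {E : Type*} [NormedAddCommGroup E] [InnerProductSpace ℝ E]
variable {F' : Type*} [NormedAddCommGroup F'] [InnerProductSpace ℝ F']

lemma proxNC_inter (C Ω : Set E) (x : E) : proxNC C (Ω ∩ C) x = proxNC C Ω x := by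
  simp [proxNC, Set.inter_assoc]

lemma limNC_inter (C Ω : Set E) (x : E) : limNC C (Ω ∩ C) x = limNC C Ω x := by
  simp [limNC, proxNC_inter, Set.inter_assoc]

lemma proxNC_smul {c : ℝ} (hc : 0 < c) {C Ω : Set E} {x v : E}
    (h : v ∈ proxNC C Ω x) : c • v ∈ proxNC C Ω x := by
  obtain ⟨t, ht, hmem⟩ := h
  exact ⟨t / c, div_pos ht hc, by rwa [smul_smul, div_mul_cancel₀ _ (ne_of_gt hc)]⟩

lemma limNC_smul {c : ℝ} (hc : 0 < c) {C Ω : Set E} {x v : E}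
    (h : v ∈ limNC C Ω x) : c • v ∈ limNC C Ω x := by
  obtain ⟨xs, vs, h1, h2, h3, h4⟩ := h
  exact ⟨xs, fun k => c • vs k, h1, h2, fun k => proxNC_smul hc (h3 k), h4.const_smul c⟩

lemma toL2_norm_sq (x : E) (y : F') : ‖toL2 x y‖ ^ 2 = ‖x‖ ^ 2 + ‖y‖ ^ 2 :=
  WithLp.prod_norm_sq_eq_of_L2 _

lemma toL2_add (a c : E) (b d : F') : toL2 a b + toL2 c d = toL2 (a + c) (b + d) := rfl

lemma toL2_sub (a c : E) (b d : F') : toL2 a b - toL2 c d = toL2 (a - c) (b - d) := rfl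

lemma toL2_smul (r : ℝ) (a : E) (b : F') : r • toL2 a b = toL2 (r • a) (r • b) := rfl

lemma toL2_eta (z : WithLp 2 (E × F')) :
    toL2 ((WithLp.equiv 2 (E × F')) z).1 ((WithLp.equiv 2 (E × F')) z).2 = z :=
  (WithLp.equiv 2 (E × F')).symm_apply_apply z

/-- The second coordinate of a proximal normal to an epigraph is nonpositive. -/
lemma prox_snd_nonpos {f : E → WithTop ℝ} {C : Set E} {z v : WithLp 2 (E × ℝ)}
    (h : v ∈ proxNC (cylL2 C) (epiL2 f) z) :
    ((WithLp.equiv 2 (E × ℝ)) v).2 ≤ 0 := by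
  set e := WithLp.equiv 2 (E × ℝ)
  obtain ⟨t, ht, hproj, _⟩ := h
  obtain ⟨hzmem, hdist⟩ := hproj
  by_contra hv2
  push_neg at hv2
  set v2 : ℝ := (e v).2 with hv2def
  set s : ℝ := t * v2 with hs
  have hspos : 0 < s := mul_pos ht hv2
  -- the comparison point
  set w : WithLp 2 (E × ℝ) := toL2 (e z).1 ((e z).2 + s) with hw
  have hwmem : w ∈ epiL2 f ∩ cylL2 C := by
    constructor
    · have hz1 : f (e z).1 ≤ (((e z).2 : ℝ) : WithTop ℝ) := hzmem.1
      show f (e z).1 ≤ (((e z).2 + s : ℝ) : WithTop ℝ)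
      exact le_trans hz1 (by exact_mod_cast le_add_of_nonneg_right hspos.le)
    · exact hzmem.2
  have hle : ‖z - (z + t • v)‖ ≤ ‖(z + t • v) - w‖ := by
    rw [hdist, ← dist_eq_norm]
    exact Metric.infDist_le_dist_of_mem hwmem
  have hz' : z = toL2 (e z).1 (e z).2 := (toL2_eta z).symm
  have hv' : v = toL2 (e v).1 (e v).2 := (toL2_eta v).symm
  have hA : z - (z + t • v) = toL2 (-(t • (e v).1)) (-(t * v2)) := by
    rw [hz', hv', toL2_smul, toL2_add, toL2_sub]
    congr 1 <;> abel
  have hB : (z + t • v) - w = toL2 (t • (e v).1) 0 := by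
    rw [hz', hv', toL2_smul, toL2_add, hw, toL2_sub]
    congr 1
    · abel
    · simp only [smul_eq_mul, hs]; ring
  have hnorms : ‖toL2 (-(t • (e v).1)) (-(t * v2))‖ ≤ ‖toL2 (t • (e v).1) (0 : ℝ)‖ := by
    rw [← hA, ← hB]
    exact hle
  have hsq := pow_le_pow_left₀ (norm_nonneg _) hnorms 2
  rw [toL2_norm_sq, toL2_norm_sq, norm_neg, norm_zero] at hsq
  have : (t * v2) ^ 2 ≤ 0 := by
    have h0 : ‖-(t * v2)‖ ^ 2 = (t * v2) ^ 2 := by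
      rw [norm_neg, Real.norm_eq_abs, sq_abs]
    nlinarith [h0]
  have : t * v2 = 0 := by nlinarith [sq_nonneg (t * v2)]
  nlinarith [mul_pos ht hv2]

/-- The second coordinate of a limiting normal to an epigraph is nonpositive. -/
lemma lim_snd_nonpos {f : E → WithTop ℝ} {C : Set E} {z v : WithLp 2 (E × ℝ)}
    (h : v ∈ limNC (cylL2 C) (epiL2 f) z) :
    ((WithLp.equiv 2 (E × ℝ)) v).2 ≤ 0 := by
  obtain ⟨xs, vs, _, _, h3, h4⟩ := h
  have hcont : Continuous (fun p : WithLp 2 (E × ℝ) => ((WithLp.equiv 2 (E × ℝ)) p).2) :=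
    (continuous_snd.comp (WithLp.prod_continuous_ofLp 2 E ℝ))
  have htend : Filter.Tendsto (fun k => ((WithLp.equiv 2 (E × ℝ)) (vs k)).2)
      Filter.atTop (nhds ((WithLp.equiv 2 (E × ℝ)) v).2) := (hcont.tendsto _).comp h4
  exact le_of_tendsto htend (Filter.Eventually.of_forall fun k => prox_snd_nonpos (h3 k))

end Aux

/-- Theorem 2: `D*_C 𝓔^f(xb,f(xb))(λ)` equals `λ∂_C f(xb)` for `λ > 0`,
`∂^∞_C f(xb)` for `λ = 0`, and is empty for `λ < 0`. -/
theorem stmt15 {n : ℕ}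
    (f : EuclideanSpace ℝ (Fin n) → WithTop ℝ) (C : Set (EuclideanSpace ℝ (Fin n)))
    (hCne : C.Nonempty) (hCcl : IsClosed C) (hCcv : Convex ℝ C)
    (xb : EuclideanSpace ℝ (Fin n)) (hxbC : xb ∈ C) (hxbdom : f xb ≠ ⊤)
    (hloc : ∃ r > (0 : ℝ), IsClosed (epiL2 f ∩ Metric.closedBall (toL2 xb (rv f xb)) r)) :
    ∀ l : ℝ,
      (0 < l → coderivWRT C (epiMap f) xb (rv f xb) l = l • limSubdiffWRT C f xb) ∧
      coderivWRT C (epiMap f) xb (rv f xb) 0 = singSubdiffWRT C f xb ∧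
      (l < 0 → coderivWRT C (epiMap f) xb (rv f xb) l = ∅) := by
  intro l
  have key : ∀ m : ℝ, coderivWRT C (epiMap f) xb (rv f xb) m =
      {xstar | toL2 xstar (-m) ∈ limNC (cylL2 C) (epiL2 f) (toL2 xb (rv f xb))} := by
    intro m
    have hg : gphL2 (epiMap f) = epiL2 f := rfl
    simp only [coderivWRT, hg, limNC_inter]
  refine ⟨?_, ?_, ?_⟩
  · intro hl
    ext xstar
    rw [key l]
    constructor
    · intro hx
      refine Set.mem_smul_set.mpr ⟨l⁻¹ • xstar, ?_, smul_inv_smul₀ (ne_of_gt hl) xstar⟩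
      have : toL2 (l⁻¹ • xstar) (-1 : ℝ) = l⁻¹ • toL2 xstar (-l) := by
        rw [toL2_smul]
        congr 1
        simp [smul_eq_mul]
        field_simp
      show toL2 (l⁻¹ • xstar) (-1 : ℝ) ∈ limNC (cylL2 C) (epiL2 f) (toL2 xb (rv f xb))
      rw [this]
      exact limNC_smul (inv_pos.mpr hl) hx
    · intro hx
      obtain ⟨y, hy, rfl⟩ := Set.mem_smul_set.mp hx
      have : toL2 (l • y) (-l) = l • toL2 y (-1 : ℝ) := by
        rw [toL2_smul]
        congr 1
        simp [smul_eq_mul]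
      show toL2 (l • y) (-l) ∈ limNC (cylL2 C) (epiL2 f) (toL2 xb (rv f xb))
      rw [this]
      exact limNC_smul hl hy
  · rw [key 0]
    ext v
    simp only [Set.mem_setOf_eq, neg_zero]
    rfl
  · intro hl
    rw [key l]
    ext xstar
    simp only [Set.mem_setOf_eq, Set.mem_empty_iff_false, iff_false]
    intro h
    have h2 := lim_snd_nonpos h
    have : ((WithLp.equiv 2 (EuclideanSpace ℝ (Fin n) × ℝ)) (toL2 xstar (-l))).2 = -l :=
      congrArg Prod.snd ((WithLp.equiv 2 _).apply_symm_apply (xstar, -l))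
    rw [this] at h2
    linarith
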